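/- Let L be a 2×2 real symmetric positive semidefinite matrix. The L-ensemble with kernel L satisfies Pr(X_1=1, X_2=1) ≤ Pr(X_1=1)·Pr(X_2=1), i.e., L-ensembles on two variables cannot represent positive correlation. -/

import Mathlib

open Matrix

/-- A 2×2 L-ensemble cannot represent positive correlation:
`Pr(X_1=1, X_2=1) ≤ Pr(X_1=1)·Pr(X_2=1)`, where
`Pr(X_1=1,X_2=1) = det L / det(L+I)`, `Pr(X_1=1) = (L₁₁ + det L)/det(L+I)` and
`Pr(X_2=1) = (L₂₂ + det L)/det(L+I)`. -/
theorem lensemble_two_vars_negative_correlation (L : Matrix (Fin 2) (Fin 2) ℝ)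
    (hL : L.PosSemidef) :
    L.det / (L + 1).det
      ≤ ((L 0 0 + L.det) / (L + 1).det) * ((L 1 1 + L.det) / (L + 1).det) := by
  have hsym : L 1 0 = L 0 1 := by
    have := hL.isHermitian.apply 1 0
    simpa using this.symm
  have q := (Matrix.posSemidef_iff_dotProduct_mulVec.mp hL).2
  have ha : 0 ≤ L 0 0 := by
    have := q ![1, 0]
    simpa [Matrix.mulVec, dotProduct, Fin.sum_univ_two] using this
  have hc : 0 ≤ L 1 1 := by
    have := q ![0, 1]
    simpa [Matrix.mulVec, dotProduct, Fin.sum_univ_two] using this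
  have h1 := q ![L 1 1, -(L 0 1)]
  have h2 := q ![-(L 0 1), L 0 0]
  have h4 := q ![L 0 1, -1]
  simp [Matrix.mulVec, dotProduct, Fin.sum_univ_two, hsym] at h1 h2 h4
  have hdet : L.det = L 0 0 * L 1 1 - L 0 1 * L 0 1 := by
    rw [Matrix.det_fin_two, hsym]
  have hdet2 : (L + 1).det = (L 0 0 + 1) * (L 1 1 + 1) - L 0 1 * L 0 1 := by
    rw [Matrix.det_fin_two]
    simp [Matrix.one_apply, hsym]
  have hdnn : 0 ≤ L.det := by nlinarith [sq_nonneg (L 0 1), sq_nonneg (L 0 0 + L 1 1)]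
  have hD : 0 < (L + 1).det := by nlinarith
  have key : L.det * (L + 1).det ≤ (L 0 0 + L.det) * (L 1 1 + L.det) := by
    nlinarith [sq_nonneg (L 0 1)]
  rw [div_mul_div_comm, div_le_div_iff₀ hD (by positivity)]
  nlinarith [mul_le_mul_of_nonneg_right key hD.le]
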